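/- A graph P admits a covering of size 2 satisfying conditions A' and B' if and only if P is disconnected. -/

import Mathlib

open SimpleGraph

variable {V : Type*} {ι : Type*}

/-- Eccentricity (in `ℕ∞`) of a vertex. -/
noncomputable def gecc (G : SimpleGraph V) (v : V) : ℕ∞ := ⨆ u, G.edist v u

/-- Radius of a graph. -/
noncomputable def grad (G : SimpleGraph V) : ℕ∞ := ⨅ v, gecc G v

/-- Diameter of a graph. -/
noncomputable def gdiam (G : SimpleGraph V) : ℕ∞ := ⨆ v, gecc G v

/-- The center: vertices of minimum eccentricity. -/
def gcenter (G : SimpleGraph V) : Set V := {v | gecc G v = grad G}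

/-- Eccentric vertices of `v`. -/
def eccSet (G : SimpleGraph V) (v : V) : Set V := {u | G.edist v u = gecc G v}

/-- The centered periphery. -/
def cperiph (G : SimpleGraph V) : Set V := ⋃ z ∈ gcenter G, eccSet G z

/-- Uniform central graph. -/
def IsUCG (G : SimpleGraph V) : Prop := ∀ c ∈ gcenter G, eccSet G c = cperiph G

/-- Condition A. -/
def CondA (G : SimpleGraph V) (P : ι → Set V) : Prop :=
  ∀ i, ∃ p, p ∉ P i ∧ ∀ q ∈ P i, 2 ≤ G.edist q p

/-- Condition B. -/
def CondB (G : SimpleGraph V) (P : ι → Set V) : Prop :=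
  ∀ i, ∀ p ∈ P i,
    (∃ p', p' ∉ P i ∧ 3 ≤ G.edist p p') ∨ (∃ j, j ≠ i ∧ ∀ q ∈ P j, 2 ≤ G.edist p q)

/-- Condition A′. -/
def CondA' (G : SimpleGraph V) (P : ι → Set V) : Prop :=
  ∀ i, (∃ p, p ∉ P i ∧ ∀ q ∈ P i, 3 ≤ G.edist q p) ∨
    (∃ j, j ≠ i ∧ ∀ q ∈ P i, ∀ q' ∈ P j, 2 ≤ G.edist q q')

/-- Condition B′. -/
def CondB' (G : SimpleGraph V) (P : ι → Set V) : Prop :=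
  ∀ i, ∀ p ∈ P i, ∃ j, j ≠ i ∧ ∀ q ∈ P j, 2 ≤ G.edist p q

/-- Minimum size of a covering satisfying condition A. -/
noncomputable def covA (G : SimpleGraph V) : ℕ :=
  sInf {k | ∃ P : Fin k → Set V, (⋃ i, P i) = Set.univ ∧ CondA G P}

/-- Minimum size of a covering satisfying conditions A and B. -/
noncomputable def covAB (G : SimpleGraph V) : ℕ :=
  sInf {k | ∃ P : Fin k → Set V, (⋃ i, P i) = Set.univ ∧ CondA G P ∧ CondB G P}

/-- Distance from a vertex to the center. -/
noncomputable def distToCenter (G : SimpleGraph V) (u : V) : ℕ∞ :=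
  ⨅ z ∈ gcenter G, G.edist u z

/-- The set of vertices at distance exactly `m` from the center. -/
def Dlevel (G : SimpleGraph V) (m : ℕ) : Set V := {u | distToCenter G u = (m : ℕ∞)}

/-- Vertices of the centered periphery lying on a radial path through `x`. -/
def Pset (G : SimpleGraph V) (r : ℕ) (x : V) : Set V :=
  {p | p ∈ cperiph G ∧ ∃ c ∈ gcenter G, ∃ W : G.Walk c p,
    W.IsPath ∧ W.length = r ∧ x ∈ W.support}

/-- All vertices lying on some radial path through `x`. -/
def radialSupport (G : SimpleGraph V) (r : ℕ) (x : V) : Set V :=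
  {u | ∃ c ∈ gcenter G, ∃ p ∈ cperiph G, ∃ W : G.Walk c p,
    W.IsPath ∧ W.length = r ∧ x ∈ W.support ∧ u ∈ W.support}

/-- A graph admits a covering of size 2 (with nonempty parts) satisfying conditions A′ and
B′ if and only if it is disconnected. -/

private lemma cross_lemma {V : Type*} {G : SimpleGraph V} {S : Set V} :
    ∀ {a b : V}, G.Walk a b → a ∈ S → b ∉ S → ∃ u v, G.Adj u v ∧ u ∈ S ∧ v ∉ S := by
  intro a b W
  induction W with
  | nil => intro h h'; exact absurd h h'
  | @cons a c b h W ih =>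
    intro ha hb
    by_cases hc : c ∈ S
    · exact ih hc hb
    · exact ⟨a, c, h, ha, hc⟩

theorem stmt18 [Nonempty V] (G : SimpleGraph V) :
    (∃ P : Fin 2 → Set V, (∀ i, (P i).Nonempty) ∧ (⋃ i, P i) = Set.univ ∧
      CondA' G P ∧ CondB' G P) ↔ ¬G.Connected := by
  constructor
  · rintro ⟨P, hne, hcov, _, hB⟩ hconn
    -- parts are disjoint
    have hdisj : ∀ p, p ∈ P 0 → p ∉ P 1 := by
      intro p hp0 hp1
      obtain ⟨j, hj, hq⟩ := hB 0 p hp0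
      have : j = 1 := by omega
      subst this
      have := hq p hp1
      simp [SimpleGraph.edist_self] at this
    obtain ⟨p, hp⟩ := hne 0
    obtain ⟨q, hq⟩ := hne 1
    have hrq : G.Reachable p q := hconn.preconnected p q
    obtain ⟨u, v, huv, hu, hv⟩ := cross_lemma hrq.some hp (fun hq0 => hdisj q hq0 hq)
    have hv1 : v ∈ P 1 := by
        have : v ∈ ⋃ i, P i := hcov ▸ Set.mem_univ v
        obtain ⟨i, hi⟩ := Set.mem_iUnion.mp this
        fin_cases i
        · exact absurd hi hv
        · exact hi
    obtain ⟨j, hj, hqq⟩ := hB 0 u hu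
    have : j = 1 := by omega
    subst this
    have h2 := hqq v hv1
    rw [(SimpleGraph.edist_eq_one_iff_adj).mpr huv] at h2
    exact absurd h2 (by norm_num)
  · intro hconn
    rw [SimpleGraph.connected_iff] at hconn
    push_neg at hconn
    have hpre : ¬ G.Preconnected := fun h => (not_nonempty_iff.mpr (hconn h)) ‹Nonempty V›
    rw [SimpleGraph.Preconnected] at hpre
    push_neg at hpre
    obtain ⟨u, v, huv⟩ := hpre
    refine ⟨![{x | G.Reachable u x}, {x | ¬ G.Reachable u x}], ?_, ?_, ?_, ?_⟩
    · intro i; fin_cases i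
      · exact ⟨u, SimpleGraph.Reachable.refl u⟩
      · exact ⟨v, huv⟩
    · ext x
      simp only [Set.mem_iUnion, Set.mem_univ, iff_true]
      by_cases h : G.Reachable u x
      · exact ⟨0, h⟩
      · exact ⟨1, h⟩
    · intro i
      right
      have key : ∀ q ∈ ({x | G.Reachable u x} : Set V), ∀ q' ∈ ({x | ¬ G.Reachable u x} : Set V),
          2 ≤ G.edist q q' := by
        intro q hq q' hq'
        have : ¬ G.Reachable q q' := fun h => hq' (hq.trans h)
        rw [SimpleGraph.edist_eq_top_of_not_reachable this]
        exact le_top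
      fin_cases i
      · exact ⟨1, by decide, key⟩
      · exact ⟨0, by decide, fun q hq q' hq' => (SimpleGraph.edist_comm (u := q) (v := q')) ▸ key q' hq' q hq⟩
    · intro i p hp
      have key : ∀ q ∈ ({x | G.Reachable u x} : Set V), ∀ q' ∈ ({x | ¬ G.Reachable u x} : Set V),
          2 ≤ G.edist q q' := by
        intro q hq q' hq'
        have : ¬ G.Reachable q q' := fun h => hq' (hq.trans h)
        rw [SimpleGraph.edist_eq_top_of_not_reachable this]
        exact le_top
      fin_cases i
      · exact ⟨1, by decide, fun q hq => key p hp q hq⟩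
      · exact ⟨0, by decide, fun q hq => (SimpleGraph.edist_comm (u := p) (v := q)) ▸ key q hq p hp⟩
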